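/- (Deterministic Lagrange multiplier bound for empirical likelihood) Let Z_1,…,Z_n be real numbers and let λ ∈ ℝ satisfy 1 + λZ_i > 0 for every i = 1,…,n and ∑_{i=1}^n Z_i/(1 + λZ_i) = 0. Then |λ| · (n⁻¹ ∑_{i=1}^n Z_i²) ≤ (1 + |λ| · max_{1≤i≤n}|Z_i|) · |n⁻¹ ∑_{i=1}^n Z_i|. -/

import Mathlib

/-- Deterministic Lagrange multiplier bound for empirical likelihood: if
`1 + λZᵢ > 0` for all `i` and `∑ Zᵢ/(1+λZᵢ) = 0`, then
`|λ|·(n⁻¹∑Zᵢ²) ≤ (1 + |λ|·maxᵢ|Zᵢ|)·|n⁻¹∑Zᵢ|`. -/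
theorem stmt_16 {n : ℕ} (hn : 0 < n) (Z : Fin n → ℝ) (lam : ℝ)
    (hpos : ∀ i, 0 < 1 + lam * Z i)
    (hsol : ∑ i, Z i / (1 + lam * Z i) = 0) :
    |lam| * ((n : ℝ)⁻¹ * ∑ i, (Z i) ^ 2) ≤
      (1 + |lam| *
          Finset.univ.sup' (Finset.univ_nonempty_iff.mpr (Fin.pos_iff_nonempty.mp hn))
            (fun i => |Z i|)) *
        |(n : ℝ)⁻¹ * ∑ i, Z i| := by
  have hne : (Finset.univ : Finset (Fin n)).Nonempty :=
    Finset.univ_nonempty_iff.mpr (Fin.pos_iff_nonempty.mp hn)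
  set M := Finset.univ.sup' hne (fun i => |Z i|) with hM
  have hMnn : 0 ≤ M :=
    le_trans (abs_nonneg (Z hne.choose))
      (Finset.le_sup' (fun i => |Z i|) (Finset.mem_univ hne.choose))
  have hC : (0:ℝ) < 1 + |lam| * M := by positivity
  set S := ∑ i, Z i ^ 2 / (1 + lam * Z i) with hS
  have hSnn : 0 ≤ S := Finset.sum_nonneg fun i _ => div_nonneg (sq_nonneg _) (hpos i).le
  -- ∑ Z i = lam * S
  have hsum : ∑ i, Z i = lam * S := by
    have : ∀ i : Fin n, Z i = Z i / (1 + lam * Z i) + lam * (Z i ^ 2 / (1 + lam * Z i)) := by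
      intro i
      have h0 := (hpos i).ne'
      rw [mul_div_assoc', ← add_div, eq_div_iff h0]
      ring
    calc ∑ i, Z i = ∑ i, (Z i / (1 + lam * Z i) + lam * (Z i ^ 2 / (1 + lam * Z i))) :=
          Finset.sum_congr rfl fun i _ => this i
      _ = (∑ i, Z i / (1 + lam * Z i)) + lam * S := by
          rw [Finset.sum_add_distrib, ← Finset.mul_sum]
      _ = lam * S := by rw [hsol, zero_add]
  -- pointwise bound: Z i ^ 2 ≤ (1 + |lam| * M) * (Z i ^ 2 / (1 + lam * Z i))
  have hpt : ∀ i : Fin n, Z i ^ 2 ≤ (1 + |lam| * M) * (Z i ^ 2 / (1 + lam * Z i)) := by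
    intro i
    have h1 : 1 + lam * Z i ≤ 1 + |lam| * M := by
      have : lam * Z i ≤ |lam| * M := by
        calc lam * Z i ≤ |lam * Z i| := le_abs_self _
          _ = |lam| * |Z i| := abs_mul _ _
          _ ≤ |lam| * M := by
              exact mul_le_mul_of_nonneg_left
                (Finset.le_sup' (fun j => |Z j|) (Finset.mem_univ i)) (abs_nonneg _)
      linarith
    rw [mul_div_assoc', le_div_iff₀ (hpos i)]
    nlinarith [sq_nonneg (Z i), hpos i]
  have hsumsq : ∑ i, Z i ^ 2 ≤ (1 + |lam| * M) * S := by
    calc ∑ i, Z i ^ 2 ≤ ∑ i, (1 + |lam| * M) * (Z i ^ 2 / (1 + lam * Z i)) :=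
          Finset.sum_le_sum fun i _ => hpt i
      _ = (1 + |lam| * M) * S := by rw [← Finset.mul_sum]
  have key : |lam| * ∑ i, Z i ^ 2 ≤ (1 + |lam| * M) * |∑ i, Z i| := by
    calc |lam| * ∑ i, Z i ^ 2 ≤ |lam| * ((1 + |lam| * M) * S) :=
          mul_le_mul_of_nonneg_left hsumsq (abs_nonneg _)
      _ = (1 + |lam| * M) * (|lam| * S) := by ring
      _ = (1 + |lam| * M) * |∑ i, Z i| := by
          rw [hsum, abs_mul, abs_of_nonneg hSnn]
  have hninv : (0:ℝ) < (n : ℝ)⁻¹ := by positivity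
  rw [abs_mul, abs_of_nonneg hninv.le]
  calc |lam| * ((n : ℝ)⁻¹ * ∑ i, Z i ^ 2) = (n:ℝ)⁻¹ * (|lam| * ∑ i, Z i ^ 2) := by ring
    _ ≤ (n:ℝ)⁻¹ * ((1 + |lam| * M) * |∑ i, Z i|) :=
        mul_le_mul_of_nonneg_left key hninv.le
    _ = (1 + |lam| * M) * ((n:ℝ)⁻¹ * |∑ i, Z i|) := by ring
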